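/- For every n ≥ 1 and d ≥ 1, there exist a scalar α > 0 and a positive definite symmetric matrix Q (indexed by monomials of degree at most d in n variables) such that 1 + α(xᵀx)^d = φ_d(x)ᵀ Q φ_d(x) for all x ∈ ℝⁿ, where φ_d(x) is the vector of all monomials in x of degree at most d. -/

import Mathlib

open Finset

noncomputable section
namespace Stmt5Aux

abbrev Idx (n d : ℕ) := {m : Fin n → Fin (d+1) // (∑ i, (m i : ℕ)) ≤ d}

variable {n d : ℕ}

def dg (m : Idx n d) : ℕ := ∑ i, (m.1 i : ℕ)

def mlt (m : Idx n d) : ℝ := (Nat.multinomial Finset.univ (fun i => (m.1 i : ℕ)) : ℝ)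

lemma mlt_pos (m : Idx n d) : 0 < mlt m := by
  unfold mlt; exact_mod_cast Nat.multinomial_pos _ _

def phi (x : Fin n → ℝ) (m : Idx n d) : ℝ := ∏ i, x i ^ (m.1 i : ℕ)

lemma expand (y : Fin n → ℝ) {k : ℕ} (hk : k ≤ d) :
    (∑ i, y i) ^ k
      = ∑ m : Idx n d, (if dg m = k then mlt m else 0) * ∏ i, y i ^ (m.1 i : ℕ) := by
  rw [Finset.sum_pow_eq_sum_piAntidiag]
  simp only [ite_mul, zero_mul]
  rw [← Finset.sum_filter]
  refine Finset.sum_bij' (i := fun f hf => ?_) (j := fun m _ => fun i => (m.1 i : ℕ))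
    ?_ ?_ ?_ ?_ ?_
  · -- construct the Idx element
    have hf' := (Finset.mem_piAntidiag.mp hf).1
    refine ⟨fun i => ⟨f i, ?_⟩, ?_⟩
    · have : f i ≤ d := le_trans (le_trans (Finset.single_le_sum
        (f := f) (fun j _ => Nat.zero_le _) (Finset.mem_univ i)) (le_of_eq hf')) hk
      omega
    · simp only [hf']; omega
  · intro f hf
    have hf' := (Finset.mem_piAntidiag.mp hf).1
    rw [Finset.mem_filter]
    simp only [Finset.mem_univ, true_and, dg]
    simp [hf']
  · intro m hm
    simp only [Finset.mem_filter, Finset.mem_univ, true_and] at hm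
    rw [Finset.mem_piAntidiag]
    exact ⟨hm, fun i _ => Finset.mem_univ i⟩
  · intro f hf; funext i; rfl
  · intro m hm; rfl
  · intro f hf; rfl

end Stmt5Aux

namespace Stmt5Aux
variable {n d : ℕ}

lemma expand_sq (x : Fin n → ℝ) {k : ℕ} (hk : k ≤ d) :
    (∑ i, x i ^ 2) ^ k
      = ∑ m : Idx n d, (if dg m = k then mlt m else 0) * (phi x m)^2 := by
  rw [expand (fun i => x i ^ 2) hk]
  refine Finset.sum_congr rfl fun m _ => ?_
  congr 1
  rw [phi, ← Finset.prod_pow]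
  exact Finset.prod_congr rfl fun i _ => by rw [← pow_mul, ← pow_mul, mul_comm]

lemma diag_eval (x : Fin n → ℝ) :
    ∑ m : Idx n d, mlt m * (phi x m)^2
      = ∑ k ∈ Finset.range (d+1), (∑ i, x i ^ 2) ^ k := by
  have : ∀ k ∈ Finset.range (d+1), (∑ i, x i ^ 2) ^ k
      = ∑ m : Idx n d, (if dg m = k then mlt m else 0) * (phi x m)^2 :=
    fun k hk => expand_sq x (by simpa using Nat.lt_succ_iff.mp (Finset.mem_range.mp hk))
  rw [Finset.sum_congr rfl this, Finset.sum_comm]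
  refine Finset.sum_congr rfl fun m _ => ?_
  simp only [ite_mul, zero_mul]
  rw [Finset.sum_ite_eq (Finset.range (d+1)) (dg m)]
  simp [dg, Nat.lt_succ_iff, m.2]

def dbl (μ : Idx n d) (h : 2 * dg μ ≤ d) : Idx n d :=
  ⟨fun i => ⟨2 * (μ.1 i : ℕ), by
      have : (μ.1 i : ℕ) ≤ dg μ := Finset.single_le_sum
        (f := fun j => (μ.1 j : ℕ)) (fun j _ => Nat.zero_le _) (Finset.mem_univ i)
      omega⟩, by
    simp only [← Finset.mul_sum]
    exact h⟩

def dbl1 (μ : Idx n d) (i0 : Fin n) (h : 2 * dg μ + 1 ≤ d) : Idx n d :=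
  ⟨fun i => ⟨2 * (μ.1 i : ℕ) + (if i = i0 then 1 else 0), by
      have : (μ.1 i : ℕ) ≤ dg μ := Finset.single_le_sum
        (f := fun j => (μ.1 j : ℕ)) (fun j _ => Nat.zero_le _) (Finset.mem_univ i)
      have : (if i = i0 then 1 else 0) ≤ 1 := by split <;> omega
      omega⟩, by
    simp only [Finset.sum_add_distrib, ← Finset.mul_sum, Finset.sum_ite_eq']
    simpa [dg] using h⟩

lemma phi_dbl (x : Fin n → ℝ) (μ : Idx n d) (h : 2 * dg μ ≤ d) :
    phi x (dbl μ h) = (phi x μ)^2 := by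
  rw [phi, phi, ← Finset.prod_pow]
  exact Finset.prod_congr rfl fun i _ => by rw [dbl]; simp [← pow_mul, mul_comm]

lemma phi_dbl1 (x : Fin n → ℝ) (μ : Idx n d) (i0 : Fin n) (h : 2 * dg μ + 1 ≤ d) :
    phi x (dbl1 μ i0 h) = x i0 * (phi x μ)^2 := by
  rw [phi, phi, ← Finset.prod_pow]
  have : ∀ i : Fin n, x i ^ ((dbl1 μ i0 h).1 i : ℕ)
      = (x i ^ (μ.1 i : ℕ))^2 * (if i = i0 then x i else 1) := by
    intro i
    rw [dbl1]
    rcases eq_or_ne i i0 with rfl | hne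
    · simp [pow_add, ← pow_mul, mul_comm]
    · simp [hne, pow_add, ← pow_mul, mul_comm]
  rw [Finset.prod_congr rfl (fun i _ => this i), Finset.prod_mul_distrib,
    Finset.prod_ite_eq' Finset.univ i0 x]
  simp [mul_comm]

end Stmt5Aux

namespace Stmt5Aux
variable {n d : ℕ}

def cvec (s : ℕ) (μ : Idx n d) : ℝ :=
  if dg μ = s + 1 then mlt μ else if dg μ = s then -(mlt μ) else 0

def ve (s : ℕ) (m : Idx n d) : ℝ :=
  ∑ μ : Idx n d, if (∀ i, (m.1 i : ℕ) = 2 * (μ.1 i : ℕ)) then cvec s μ else 0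

def vo (s : ℕ) (i0 : Fin n) (m : Idx n d) : ℝ :=
  ∑ μ : Idx n d,
    if (∀ i, (m.1 i : ℕ) = 2 * (μ.1 i : ℕ) + (if i = i0 then 1 else 0)) then cvec s μ else 0

lemma sum_cond_even (x : Fin n → ℝ) (μ : Idx n d) (c : ℝ) (h : 2 * dg μ ≤ d) :
    (∑ m : Idx n d, if (∀ i, (m.1 i : ℕ) = 2 * (μ.1 i : ℕ)) then c * phi x m else 0)
      = c * (phi x μ)^2 := by
  rw [Finset.sum_eq_single (dbl μ h)]
  · have hc : ∀ i : Fin n, (((dbl μ h).1 i : ℕ)) = 2 * (μ.1 i : ℕ) := fun i => rfl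
    rw [if_pos hc, phi_dbl]
  · intro b _ hb
    rw [if_neg]
    intro hcond
    exact hb (Subtype.ext (funext fun i => Fin.ext (by rw [hcond i]; rfl)))
  · intro hm; exact absurd (Finset.mem_univ _) hm

lemma sum_cond_odd (x : Fin n → ℝ) (μ : Idx n d) (i0 : Fin n) (c : ℝ)
    (h : 2 * dg μ + 1 ≤ d) :
    (∑ m : Idx n d,
        if (∀ i, (m.1 i : ℕ) = 2 * (μ.1 i : ℕ) + (if i = i0 then 1 else 0))
        then c * phi x m else 0)
      = c * (x i0 * (phi x μ)^2) := by
  rw [Finset.sum_eq_single (dbl1 μ i0 h)]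
  · have hc : ∀ i : Fin n, (((dbl1 μ i0 h).1 i : ℕ))
        = 2 * (μ.1 i : ℕ) + (if i = i0 then 1 else 0) := fun i => rfl
    rw [if_pos hc, phi_dbl1]
  · intro b _ hb
    rw [if_neg]
    intro hcond
    exact hb (Subtype.ext (funext fun i => Fin.ext (by rw [hcond i]; rfl)))
  · intro hm; exact absurd (Finset.mem_univ _) hm

lemma cvec_sum (x : Fin n → ℝ) {s : ℕ} (hs : s + 1 ≤ d) :
    ∑ μ : Idx n d, cvec s μ * (phi x μ)^2
      = (∑ i, x i ^ 2)^(s+1) - (∑ i, x i ^ 2)^s := by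
  have key : ∀ μ : Idx n d, cvec s μ * (phi x μ)^2
      = (if dg μ = s+1 then mlt μ else 0) * (phi x μ)^2
        + (-1) * ((if dg μ = s then mlt μ else 0) * (phi x μ)^2) := by
    intro μ
    rw [cvec]
    rcases eq_or_ne (dg μ) (s+1) with h1 | h1
    · rw [if_pos h1, if_pos h1, if_neg (by omega)]; ring
    · rw [if_neg h1, if_neg h1]
      rcases eq_or_ne (dg μ) s with h2 | h2
      · rw [if_pos h2, if_pos h2]; ring
      · rw [if_neg h2, if_neg h2]; ring
  rw [Finset.sum_congr rfl (fun μ _ => key μ), Finset.sum_add_distrib,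
    ← Finset.mul_sum, ← expand_sq x hs, ← expand_sq x (le_trans (Nat.le_succ s) hs)]
  ring

lemma ve_eval (x : Fin n → ℝ) {s : ℕ} (hs : 2 * (s+1) ≤ d) :
    ∑ m : Idx n d, ve s m * phi x m
      = (∑ i, x i ^ 2)^(s+1) - (∑ i, x i ^ 2)^s := by
  have step1 : ∑ m : Idx n d, ve s m * phi x m
      = ∑ μ : Idx n d, ∑ m : Idx n d,
          (if (∀ i, (m.1 i : ℕ) = 2 * (μ.1 i : ℕ)) then cvec s μ * phi x m else 0) := by
    rw [Finset.sum_comm]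
    refine Finset.sum_congr rfl fun m _ => ?_
    rw [ve, Finset.sum_mul]
    exact Finset.sum_congr rfl fun μ _ => by rw [ite_mul, zero_mul]
  rw [step1, ← cvec_sum (d := d) x (show s+1 ≤ d by omega)]
  refine Finset.sum_congr rfl fun μ _ => ?_
  rcases eq_or_ne (dg μ) (s+1) with h1 | h1
  · exact sum_cond_even x μ _ (by omega)
  rcases eq_or_ne (dg μ) s with h2 | h2
  · exact sum_cond_even x μ _ (by omega)
  · have : cvec s μ = 0 := by rw [cvec, if_neg h1, if_neg h2]
    simp [this]

lemma vo_eval (x : Fin n → ℝ) (i0 : Fin n) {s : ℕ} (hs : 2 * (s+1) + 1 ≤ d) :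
    ∑ m : Idx n d, vo s i0 m * phi x m
      = x i0 * ((∑ i, x i ^ 2)^(s+1) - (∑ i, x i ^ 2)^s) := by
  have step1 : ∑ m : Idx n d, vo s i0 m * phi x m
      = ∑ μ : Idx n d, ∑ m : Idx n d,
          (if (∀ i, (m.1 i : ℕ) = 2 * (μ.1 i : ℕ) + (if i = i0 then 1 else 0))
            then cvec s μ * phi x m else 0) := by
    rw [Finset.sum_comm]
    refine Finset.sum_congr rfl fun m _ => ?_
    rw [vo, Finset.sum_mul]
    exact Finset.sum_congr rfl fun μ _ => by rw [ite_mul, zero_mul]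
  have step2 : ∀ μ : Idx n d,
      (∑ m : Idx n d,
        (if (∀ i, (m.1 i : ℕ) = 2 * (μ.1 i : ℕ) + (if i = i0 then 1 else 0))
          then cvec s μ * phi x m else 0)) = cvec s μ * (x i0 * (phi x μ)^2) := by
    intro μ
    rcases eq_or_ne (dg μ) (s+1) with h1 | h1
    · exact sum_cond_odd x μ i0 _ (by omega)
    rcases eq_or_ne (dg μ) s with h2 | h2
    · exact sum_cond_odd x μ i0 _ (by omega)
    · have : cvec s μ = 0 := by rw [cvec, if_neg h1, if_neg h2]
      simp [this]
  rw [step1, Finset.sum_congr rfl (fun μ _ => step2 μ)]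
  have : ∀ μ : Idx n d, cvec s μ * (x i0 * (phi x μ)^2)
      = x i0 * (cvec s μ * (phi x μ)^2) := fun μ => by ring
  rw [Finset.sum_congr rfl (fun μ _ => this μ), ← Finset.mul_sum,
    cvec_sum (d := d) x (show s+1 ≤ d by omega)]

end Stmt5Aux

namespace Stmt5Aux
variable {n d : ℕ}

def outerM (v : Idx n d → ℝ) : Matrix (Idx n d) (Idx n d) ℝ := fun a b => v a * v b

lemma outerM_psd (v : Idx n d → ℝ) : (outerM v).PosSemidef := by
  rw [Matrix.posSemidef_iff_dotProduct_mulVec]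
  constructor
  · ext a b
    simp [outerM, Matrix.conjTranspose_apply, mul_comm]
  · intro y
    have : dotProduct (star y) ((outerM v).mulVec y) = (∑ a, v a * y a)^2 := by
      simp only [dotProduct, Matrix.mulVec, outerM, Pi.star_apply, star_trivial, pow_two,
        Finset.sum_mul_sum]
      refine Finset.sum_congr rfl fun a _ => ?_
      rw [Finset.mul_sum]
      exact Finset.sum_congr rfl fun b _ => by ring
    rw [this]
    positivity

def qform (Q : Matrix (Idx n d) (Idx n d) ℝ) (x : Fin n → ℝ) : ℝ :=
  ∑ m : Idx n d, ∑ m' : Idx n d, phi x m * Q m m' * phi x m'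

lemma qform_zero (x : Fin n → ℝ) : qform (0 : Matrix (Idx n d) (Idx n d) ℝ) x = 0 := by
  simp [qform]

lemma qform_add (A B : Matrix (Idx n d) (Idx n d) ℝ) (x : Fin n → ℝ) :
    qform (A + B) x = qform A x + qform B x := by
  simp only [qform, ← Finset.sum_add_distrib]
  exact Finset.sum_congr rfl fun m _ => Finset.sum_congr rfl fun m' _ => by
    simp [Matrix.add_apply]; ring

lemma qform_smul (c : ℝ) (A : Matrix (Idx n d) (Idx n d) ℝ) (x : Fin n → ℝ) :
    qform (c • A) x = c * qform A x := by
  simp only [qform, Finset.mul_sum]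
  exact Finset.sum_congr rfl fun m _ => Finset.sum_congr rfl fun m' _ => by
    simp [Matrix.smul_apply]; ring

lemma qform_sum {ι : Type*} (s : Finset ι) (M : ι → Matrix (Idx n d) (Idx n d) ℝ)
    (x : Fin n → ℝ) : qform (∑ k ∈ s, M k) x = ∑ k ∈ s, qform (M k) x := by
  induction s using Finset.cons_induction with
  | empty => simp [qform_zero]
  | cons a s ha ih => rw [Finset.sum_cons, Finset.sum_cons, qform_add, ih]

lemma qform_diagonal (f : Idx n d → ℝ) (x : Fin n → ℝ) :
    qform (Matrix.diagonal f) x = ∑ m : Idx n d, f m * (phi x m)^2 := by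
  refine Finset.sum_congr rfl fun m _ => ?_
  have : ∀ m' : Idx n d, phi x m * Matrix.diagonal f m m' * phi x m'
      = if m = m' then f m' * (phi x m')^2 else 0 := by
    intro m'
    rcases eq_or_ne m m' with rfl | hne
    · simp [Matrix.diagonal_apply_eq]; ring
    · simp [Matrix.diagonal_apply_ne _ hne, hne]
  rw [Finset.sum_congr rfl fun m' _ => this m']
  rw [Finset.sum_ite_eq Finset.univ m (fun m' => f m' * (phi x m')^2)]
  simp

lemma qform_outer (v : Idx n d → ℝ) (x : Fin n → ℝ) :
    qform (outerM v) x = (∑ m : Idx n d, v m * phi x m)^2 := by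
  rw [qform, pow_two, Finset.sum_mul_sum]
  refine Finset.sum_congr rfl fun m _ => Finset.sum_congr rfl fun m' _ => by
    simp [outerM]; ring

end Stmt5Aux

namespace Stmt5Aux
variable {n d : ℕ}

lemma psd_smul {A : Matrix (Idx n d) (Idx n d) ℝ} (hA : A.PosSemidef) {c : ℝ} (hc : 0 ≤ c) :
    (c • A).PosSemidef := by
  rw [Matrix.posSemidef_iff_dotProduct_mulVec]
  constructor
  · ext a b
    have := hA.1
    rw [Matrix.IsHermitian] at this
    simp only [Matrix.smul_apply, Matrix.conjTranspose_apply, star_trivial, smul_eq_mul]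
    rw [← Matrix.ext_iff] at this
    have h2 := this b a
    simp only [Matrix.conjTranspose_apply, star_trivial] at h2
    rw [h2]
  · intro y
    have : dotProduct (star y) ((c • A).mulVec y)
        = c * dotProduct (star y) (A.mulVec y) := by
      rw [Matrix.smul_mulVec, dotProduct_smul, smul_eq_mul]
    rw [this]
    exact mul_nonneg hc (hA.dotProduct_mulVec_nonneg y)

lemma pd_smul {A : Matrix (Idx n d) (Idx n d) ℝ} (hA : A.PosDef) {c : ℝ} (hc : 0 < c) :
    (c • A).PosDef := by
  rw [Matrix.posDef_iff_dotProduct_mulVec]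
  constructor
  · ext a b
    have := hA.1
    rw [Matrix.IsHermitian] at this
    simp only [Matrix.smul_apply, Matrix.conjTranspose_apply, star_trivial, smul_eq_mul]
    rw [← Matrix.ext_iff] at this
    have h2 := this b a
    simp only [Matrix.conjTranspose_apply, star_trivial] at h2
    rw [h2]
  · intro y hy
    have : dotProduct (star y) ((c • A).mulVec y)
        = c * dotProduct (star y) (A.mulVec y) := by
      rw [Matrix.smul_mulVec, dotProduct_smul, smul_eq_mul]
    rw [this]
    exact mul_pos hc (hA.dotProduct_mulVec_pos hy)

lemma Hsum (m : ℕ) (t : ℝ) :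
    ∑ j ∈ Finset.range m, ((j:ℝ)+1) * t^j * (t-1)^2
      = m * t^(m+1) - ((m:ℝ)+1) * t^m + 1 := by
  induction m with
  | zero => simp
  | succ m ih =>
    rw [Finset.sum_range_succ, ih]
    push_cast
    ring

lemma scalar_id (e : ℕ) (t : ℝ) :
    ∑ k ∈ Finset.range (e+2), t^k
      + ∑ j ∈ Finset.range e, (((j:ℝ)+1)*((e:ℝ)-(j:ℝ))/2) * (t^j * (t-1)^2)
      = ((e:ℝ)+2)/2 * (1 + t^(e+1)) := by
  induction e with
  | zero => simp [Finset.sum_range_succ]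
  | succ e ih =>
    have H := Hsum e t
    have split : ∑ j ∈ Finset.range (e+1), (((j:ℝ)+1)*(((e:ℝ)+1)-(j:ℝ))/2) * (t^j*(t-1)^2)
        = (∑ j ∈ Finset.range e, (((j:ℝ)+1)*((e:ℝ)-(j:ℝ))/2) * (t^j*(t-1)^2))
          + ((∑ j ∈ Finset.range e, ((j:ℝ)+1) * t^j * (t-1)^2) / 2)
          + ((e:ℝ)+1)/2 * (t^e*(t-1)^2) := by
      rw [Finset.sum_range_succ, Finset.sum_div, ← Finset.sum_add_distrib]
      congr 1
      · exact Finset.sum_congr rfl fun j _ => by ring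
      · ring
    have geo : ∑ k ∈ Finset.range (e+1+2), t^k
        = (∑ k ∈ Finset.range (e+2), t^k) + t^(e+2) := Finset.sum_range_succ _ _
    push_cast at split ⊢
    rw [geo, split, H]
    linear_combination ih

def GM (k : ℕ) : Matrix (Idx n d) (Idx n d) ℝ :=
  if k % 2 = 1 then outerM (ve ((k-1)/2))
  else ∑ i0 : Fin n, outerM (vo ((k-2)/2) i0)

lemma GM_psd (k : ℕ) : (GM (n := n) (d := d) k).PosSemidef := by
  rw [GM]
  split
  · exact outerM_psd _
  · exact Finset.sum_induction _ _ (fun a b ha hb => ha.add hb)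
      (Matrix.PosSemidef.zero) (fun i0 _ => outerM_psd _)

lemma GM_eval (x : Fin n → ℝ) {k : ℕ} (h1 : 1 ≤ k) (h2 : k < d) :
    qform (GM (n := n) (d := d) k) x
      = (∑ i, x i ^ 2)^(k-1) * ((∑ i, x i ^ 2) - 1)^2 := by
  set t := ∑ i, x i ^ 2 with ht
  rcases Nat.even_or_odd k with he | ho
  · obtain ⟨s, hs⟩ := he
    have hk2 : k = 2*s := by omega
    have hmod : ¬ (k % 2 = 1) := by omega
    have hsk : (k-2)/2 = s - 1 := by omega
    have hs1 : 1 ≤ s := by omega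
    rw [GM, if_neg hmod, qform_sum, hsk]
    have heval : ∀ i0 : Fin n, qform (d := d) (outerM (vo (s-1) i0)) x
        = (x i0)^2 * (t^s - t^(s-1))^2 := by
      intro i0
      rw [qform_outer]
      have := vo_eval (d := d) x i0 (s := s - 1) (by omega)
      rw [show s - 1 + 1 = s by omega] at this
      rw [this]
      ring
    rw [Finset.sum_congr rfl fun i0 _ => heval i0, ← Finset.sum_mul, ← ht]
    have hpow : t^s = t^(s-1) * t := by
      rw [← pow_succ]; congr 1; omega
    have hpow2 : t^(k-1) = t^(s-1) * t^(s-1) * t := by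
      rw [← pow_add, ← pow_succ]; congr 1; omega
    rw [hpow, hpow2]; ring
  · obtain ⟨s, hs⟩ := ho
    have hmod : k % 2 = 1 := by omega
    have hsk : (k-1)/2 = s := by omega
    rw [GM, if_pos hmod, qform_outer, hsk, ve_eval (d := d) x (s := s) (by omega)]
    have hpow : t^(s+1) = t^s * t := pow_succ t s
    have hpow2 : t^(k-1) = t^s * t^s := by
      rw [← pow_add]; congr 1; omega
    rw [← ht, hpow, hpow2]; ring

def SM : Matrix (Idx n d) (Idx n d) ℝ :=
  ∑ k ∈ Finset.Ico 1 d, (((k:ℝ) * ((d:ℝ) - (k:ℝ))) / 2) • GM k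

def QM : Matrix (Idx n d) (Idx n d) ℝ :=
  (2/((d:ℝ)+1)) • (Matrix.diagonal mlt + SM)

lemma QM_posdef : (QM (n := n) (d := d)).PosDef := by
  apply pd_smul
  · apply Matrix.PosDef.add_posSemidef
    · exact Matrix.posDef_diagonal_iff.mpr (fun m => mlt_pos m)
    · exact Finset.sum_induction _ _ (fun a b ha hb => ha.add hb)
        (Matrix.PosSemidef.zero)
        (fun k hk => by
          refine psd_smul (GM_psd k) ?_
          have hk' := Finset.mem_Ico.mp hk
          have hkd : (k:ℝ) ≤ (d:ℝ) := by exact_mod_cast le_of_lt hk'.2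
          have h1 : (0:ℝ) ≤ (d:ℝ) - (k:ℝ) := by linarith
          have h2 : (0:ℝ) ≤ (k:ℝ) := Nat.cast_nonneg k
          positivity)
  · positivity

end Stmt5Aux

namespace Stmt5Aux
variable {n d : ℕ}

lemma QM_eval (hd : 1 ≤ d) (x : Fin n → ℝ) :
    qform (QM (n := n) (d := d)) x = 1 + (∑ i, x i ^ 2) ^ d := by
  obtain ⟨e, rfl⟩ : ∃ e, d = e + 1 := ⟨d - 1, by omega⟩
  set t := ∑ i, x i ^ 2 with ht
  have hdiag : qform (Matrix.diagonal (mlt (n := n) (d := e+1))) x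
      = ∑ k ∈ Finset.range (e+2), t^k := by
    rw [qform_diagonal, diag_eval]
  have hSM : qform (SM (n := n) (d := e+1)) x
      = ∑ j ∈ Finset.range e, (((j:ℝ)+1)*((e:ℝ)-(j:ℝ))/2) * (t^j * (t-1)^2) := by
    rw [SM, Finset.sum_Ico_eq_sum_range]
    simp only [Nat.add_sub_cancel]
    rw [qform_sum]
    refine Finset.sum_congr rfl fun j hj => ?_
    have hj' := Finset.mem_range.mp hj
    rw [qform_smul, GM_eval x (by omega) (by omega)]
    have h1 : 1 + j - 1 = j := by omega
    rw [h1, ← ht]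
    push_cast
    ring
  rw [QM, qform_smul, qform_add, hdiag, hSM, scalar_id e t]
  have h0 : ((e:ℝ)+1) + 1 ≠ 0 := by positivity
  push_cast
  field_simp
  ring

end Stmt5Aux
end

theorem stmt5 (n d : ℕ) (hn : 1 ≤ n) (hd : 1 ≤ d) :
    ∃ α : ℝ, 0 < α ∧
    ∃ Q : Matrix {m : Fin n → Fin (d+1) // (∑ i, (m i : ℕ)) ≤ d}
                 {m : Fin n → Fin (d+1) // (∑ i, (m i : ℕ)) ≤ d} ℝ,
      Q.PosDef ∧
      ∀ x : Fin n → ℝ,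
        1 + α * (∑ i, (x i)^2) ^ d =
          ∑ m : {m : Fin n → Fin (d+1) // (∑ i, (m i : ℕ)) ≤ d},
          ∑ m' : {m : Fin n → Fin (d+1) // (∑ i, (m i : ℕ)) ≤ d},
            (∏ i, x i ^ ((m : Fin n → Fin (d+1)) i : ℕ)) * Q m m' *
              (∏ i, x i ^ ((m' : Fin n → Fin (d+1)) i : ℕ)) := by
  refine ⟨1, one_pos, Stmt5Aux.QM, Stmt5Aux.QM_posdef, fun x => ?_⟩
  have h := Stmt5Aux.QM_eval (n := n) (d := d) hd x
  simp only [Stmt5Aux.qform, Stmt5Aux.phi] at h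
  rw [one_mul]
  exact h.symm
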